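/- Let a, b ∈ ℂ, and write φ_{a,b}(X) = X·F₁(X)²/F₂(X)² for the rational function with parameters (a,b). Then for every x ∈ ℂ at which all denominators involved are nonzero, one has φ_{a, −a−b−1}(x) = 1 − φ_{a,b}(1 − x). -/

import Mathlib

/-- The rational function `φ_{a,b}(x) = x·F₁(x)²/F₂(x)²`, where
`F₁(X) = X² + (2a + 2b + a²)X + 2ab + b²` and
`F₂(X) = (2a+1)X² + (a² + 2ab + 2b)X + b²`. -/
noncomputable def phi (a b x : ℂ) : ℂ :=
  x * (x ^ 2 + (2 * a + 2 * b + a ^ 2) * x + 2 * a * b + b ^ 2) ^ 2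
    / ((2 * a + 1) * x ^ 2 + (a ^ 2 + 2 * a * b + 2 * b) * x + b ^ 2) ^ 2

/-- For any `x ∈ ℂ` at which all denominators involved are nonzero, one has
`φ_{a, −a−b−1}(x) = 1 − φ_{a,b}(1 − x)`. -/
theorem phi_transform_tau (a b x : ℂ)
    (hden₁ : (2 * a + 1) * (1 - x) ^ 2 + (a ^ 2 + 2 * a * b + 2 * b) * (1 - x) + b ^ 2 ≠ 0)
    (hden₂ : (2 * a + 1) * x ^ 2
        + (a ^ 2 + 2 * a * (-a - b - 1) + 2 * (-a - b - 1)) * x + (-a - b - 1) ^ 2 ≠ 0) :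
    phi a (-a - b - 1) x = 1 - phi a b (1 - x) := by
  unfold phi
  rw [eq_sub_iff_add_eq, div_add_div _ _ (pow_ne_zero 2 hden₂) (pow_ne_zero 2 hden₁),
    div_eq_one_iff_eq (mul_ne_zero (pow_ne_zero 2 hden₂) (pow_ne_zero 2 hden₁))]
  ring
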